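/- With F, N, G = F/N as in the Möbius-type example (N_x = {0} for x < 0, N_x = ℤ for x ≥ 0), there is no topology on G making it a topological groupoid such that the quotient map q restricted to W' = ℝ × (-1/4, 1/4) is an open embedding: indeed the section s : ℝ → G, x ↦ q(x, 1/8), is continuous, but the section 9s = x ↦ q(x, 9/8) is not continuous at 0, since q(x,9/8) = q(x,1/8) for x ≥ 0 while q(x,9/8) ≠ q(x,t) for any t ∈ (-1/4,1/4) when x < 0. -/

import Mathlib

/-- The subgroup `N_x ≤ ℝ`: trivial for `x < 0` and `ℤ` for `x ≥ 0`. -/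
noncomputable def Nsub (x : ℝ) : AddSubgroup ℝ :=
  if x < 0 then ⊥ else AddSubgroup.zmultiples (1 : ℝ)

/-- Arrows of the quotient groupoid `G = F/N`: over `x` the fibre is `ℝ/N_x`. -/
def GArr : Type := (x : ℝ) × (ℝ ⧸ Nsub x)

/-- The quotient map `q : F = ℝ × ℝ → G`. -/
noncomputable def q (p : ℝ × ℝ) : GArr := ⟨p.1, QuotientAddGroup.mk p.2⟩

/-- `W' = ℝ × (-1/4, 1/4) ⊆ F`. -/
def W' : Set (ℝ × ℝ) := Set.univ ×ˢ Set.Ioo (-(1/4) : ℝ) (1/4)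

/-- Fibrewise composition on `G` (meaningful on pairs over the same point). -/
noncomputable def gcomp (a b : GArr) : GArr :=
  if h : b.1 = a.1 then ⟨a.1, a.2 + h ▸ b.2⟩ else a


lemma gcomp_q (x a b : ℝ) : gcomp (q (x, a)) (q (x, b)) = q (x, a + b) := by
  simp [gcomp, q]
  rfl

lemma part1 : ∀ x : ℝ, 0 ≤ x → q (x, 9/8) = q (x, 1/8) := by
  intro x hx
  show (⟨x, _⟩ : GArr) = ⟨x, _⟩
  refine congrArg _ (QuotientAddGroup.eq.mpr ?_)
  rw [Nsub, if_neg (not_lt.mpr hx)]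
  exact ⟨-1, by norm_num⟩

lemma part2 : ∀ x : ℝ, x < 0 → ∀ t ∈ Set.Ioo (-(1/4) : ℝ) (1/4), q (x, 9/8) ≠ q (x, t) := by
  intro x hx t ht h
  have h2 := eq_of_heq (Sigma.mk.inj_iff.mp h).2
  have h3 : ((9:ℝ)/8) = t := by
    have := QuotientAddGroup.eq.mp h2
    rw [Nsub, if_pos hx] at this
    simpa using by linarith [AddSubgroup.mem_bot.mp this]
  have := ht.2
  linarith

lemma mem_W' (x t : ℝ) (ht : t ∈ Set.Ioo (-(1/4) : ℝ) (1/4)) : (x, t) ∈ W' :=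
  ⟨Set.mem_univ _, ht⟩

lemma contF (T : TopologicalSpace GArr)
    (hoe : @Topology.IsOpenEmbedding _ _ _ T (fun w : W' => q w.val))
    (t : ℝ) (ht : t ∈ Set.Ioo (-(1/4) : ℝ) (1/4)) :
    @Continuous _ _ _ T (fun x : ℝ => q (x, t)) := by
  have hι : Continuous (fun x : ℝ => (⟨(x, t), mem_W' x t ht⟩ : W')) :=
    Continuous.subtype_mk (continuous_id.prodMk continuous_const) _
  exact hoe.continuous.comp hι

lemma part3 : ∀ T : TopologicalSpace GArr,
      @Topology.IsOpenEmbedding _ _ _ T (fun w : W' => q w.val) →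
      @Continuous _ _ _ T (fun x : ℝ => q (x, 1/8)) ∧
      ¬ @ContinuousAt _ _ _ T (fun x : ℝ => q (x, 9/8)) 0 := by
  intro T hoe
  constructor
  · exact contF T hoe (1/8) (by norm_num)
  · intro hc
    have hmem : q (0, 9/8) ∈ Set.range (fun w : W' => q w.val) := by
      rw [part1 0 le_rfl]
      exact ⟨⟨(0, 1/8), mem_W' 0 (1/8) (by norm_num)⟩, rfl⟩
    have hnhds : (fun x : ℝ => q (x, 9/8)) ⁻¹' Set.range (fun w : W' => q w.val) ∈ nhds (0:ℝ) :=
      hc.preimage_mem_nhds (hoe.isOpen_range.mem_nhds hmem)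
    have : ((fun x : ℝ => q (x, 9/8)) ⁻¹' Set.range (fun w : W' => q w.val) ∩ Set.Iio 0).Nonempty := by
      have : (fun x : ℝ => q (x, 9/8)) ⁻¹' Set.range (fun w : W' => q w.val) ∈ nhdsWithin (0:ℝ) (Set.Iio 0) :=
        mem_nhdsWithin_of_mem_nhds hnhds
      have h2 : Set.Iio (0:ℝ) ∈ nhdsWithin (0:ℝ) (Set.Iio 0) := self_mem_nhdsWithin
      exact Filter.nonempty_of_mem (Filter.inter_mem this h2)
    obtain ⟨x, hxr, hxlt⟩ := this
    obtain ⟨⟨⟨w1, w2⟩, hw⟩, hweq⟩ := hxr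
    have hw1 : w1 = x := congrArg Sigma.fst hweq
    subst hw1
    exact part2 w1 hxlt w2 hw.2 hweq.symm


/-- `q(x,9/8) = q(x,1/8)` for `x ≥ 0`, while `q(x,9/8) ≠ q(x,t)` for any
`t ∈ (-1/4,1/4)` when `x < 0`; consequently, for any topology on `G` for which
`q|W'` is an open embedding, the section `s : x ↦ q(x,1/8)` is continuous but
`9s : x ↦ q(x,9/8)` is not continuous at `0`; hence there is no topology on `G`
making it a topological groupoid (composition continuous) with `q|W'` an open
embedding. -/
theorem no_topological_groupoid_structure :
    (∀ x : ℝ, 0 ≤ x → q (x, 9/8) = q (x, 1/8)) ∧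
    (∀ x : ℝ, x < 0 → ∀ t ∈ Set.Ioo (-(1/4) : ℝ) (1/4), q (x, 9/8) ≠ q (x, t)) ∧
    (∀ T : TopologicalSpace GArr,
      @Topology.IsOpenEmbedding _ _ _ T (fun w : W' => q w.val) →
      @Continuous _ _ _ T (fun x : ℝ => q (x, 1/8)) ∧
      ¬ @ContinuousAt _ _ _ T (fun x : ℝ => q (x, 9/8)) 0) ∧
    ¬ ∃ T : TopologicalSpace GArr,
        @Topology.IsOpenEmbedding _ _ _ T (fun w : W' => q w.val) ∧
        @Continuous {p : GArr × GArr // p.2.1 = p.1.1} GArr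
          (@instTopologicalSpaceSubtype _ _ (@instTopologicalSpaceProd _ _ T T)) T
          (fun p => gcomp p.val.1 p.val.2) := by
  refine ⟨part1, part2, part3, ?_⟩
  rintro ⟨T, hoe, hcomp⟩
  letI := T
  obtain ⟨hs, hns⟩ := part3 T hoe
  -- composition step: if `x ↦ q(x,a)` and `x ↦ q(x,b)` are continuous, so is `x ↦ q(x,a+b)`
  have step : ∀ a b : ℝ, @Continuous _ _ _ T (fun x : ℝ => q (x, a)) →
      @Continuous _ _ _ T (fun x : ℝ => q (x, b)) →
      @Continuous _ _ _ T (fun x : ℝ => q (x, a + b)) := by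
    intro a b ha hb
    have hφ : Continuous
        (fun x : ℝ => (⟨(q (x, a), q (x, b)), rfl⟩ : {p : GArr × GArr // p.2.1 = p.1.1})) :=
      Continuous.subtype_mk (ha.prodMk hb) _
    have := hcomp.comp hφ
    simpa [Function.comp_def, gcomp_q] using this
  have h2 := step _ _ hs hs
  have h4 := step _ _ h2 h2
  have h8 := step _ _ h4 h4
  have h9 := step _ _ h8 hs
  norm_num at h9
  exact hns h9.continuousAt
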